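/- arXiv:2208.01111 — 4 statements merged into one kernel-verified Lean document; each statement's English description precedes it below -/
import Mathlib

section
/- Let H be a real Hilbert space, let A : H → H be a self-adjoint continuous linear operator, let T > 0, and let x ∈ H with x ≠ 0. Then for every t ∈ [0,T], ‖exp(tA) x‖ ≤ ‖x‖^(1 − t/T) · ‖exp(TA) x‖^(t/T), where the powers are real powers. -/
open scoped RealInnerProductSpace
open NormedSpace

set_option maxHeartbeats 1000000 in
set_option synthInstance.maxHeartbeats 400000 in

theorem stmt_0
    {H : Type*} [NormedAddCommGroup H] [InnerProductSpace ℝ H] [CompleteSpace H]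
    (A : H →L[ℝ] H) (hA : ∀ x y : H, ⟪A x, y⟫ = ⟪x, A y⟫)
    (T : ℝ) (hT : 0 < T) (x : H) (hx : x ≠ 0) :
    ∀ t ∈ Set.Icc (0 : ℝ) T,
      ‖NormedSpace.exp (t • A) x‖ ≤
        ‖x‖ ^ (1 - t / T) * ‖NormedSpace.exp (T • A) x‖ ^ (t / T) := by
  intro t ht
  obtain ⟨ht0, htT⟩ := ht
  set E : ℝ → (H →L[ℝ] H) := fun s => exp (s • A) with hEdef
  -- self-adjointness
  have hAsa : IsSelfAdjoint A := ContinuousLinearMap.isSelfAdjoint_iff_isSymmetric.mpr hA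
  have hEsa : ∀ s : ℝ, ∀ v w : H, ⟪E s v, w⟫ = ⟪v, E s w⟫ := by
    intro s v w
    have : IsSelfAdjoint (E s) := (IsSelfAdjoint.smul (IsSelfAdjoint.all s) hAsa).exp
    exact (ContinuousLinearMap.isSelfAdjoint_iff_isSymmetric.mp this) v w
  -- semigroup property
  have hsplit : ∀ s u : ℝ, ∀ v : H, E (s + u) v = E s (E u v) := by
    intro s u v
    have hc : Commute (s • A) (u • A) := ((Commute.refl A).smul_left s).smul_right u
    have : E (s + u) = E s * E u := by
      haveI : NormedAlgebra ℚ (H →L[ℝ] H) := NormedAlgebra.restrictScalars ℚ ℝ (H →L[ℝ] H)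
      rw [hEdef]; simp only [add_smul]; exact exp_add_of_commute hc
    rw [this]; rfl
  have hAE : ∀ s : ℝ, A * E s = E s * A := fun s =>
    (((Commute.refl A).smul_right s).exp_right)
  -- define h and its derivatives
  set h : ℝ → ℝ := fun s => ⟪E s x, x⟫ with hhdef
  set h1 : ℝ → ℝ := fun s => ⟪(E s * A) x, x⟫ with hh1def
  set h2 : ℝ → ℝ := fun s => ⟪(E s * A * A) x, x⟫ with hh2def
  have hEy : ∀ s : ℝ, E s x ≠ 0 := by
    intro s hs
    apply hx
    have h0 : E (-s) (E s x) = x := by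
      rw [← hsplit, neg_add_cancel]
      show exp ((0:ℝ) • A) x = x
      rw [zero_smul, exp_zero]; rfl
    rw [hs, map_zero] at h0; exact h0.symm
  -- h s = ‖E (s/2) x‖ ^ 2
  have hval : ∀ s : ℝ, h s = ‖E (s/2) x‖ ^ 2 := by
    intro s
    have h0 : h s = ⟪E (s/2) (E (s/2) x), x⟫ := by
      show (⟪E s x, x⟫:ℝ) = _
      rw [← hsplit, show s/2 + s/2 = s by ring]
    rw [h0, hEsa, real_inner_self_eq_norm_sq]
  have hpos : ∀ s : ℝ, 0 < h s := by
    intro s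
    rw [hval s]
    exact pow_pos (norm_pos_iff.mpr (hEy _)) 2
  -- derivatives
  have hE' : ∀ s : ℝ, HasDerivAt E (E s * A) s := fun s => hasDerivAt_exp_smul_const A s
  have hEx' : ∀ s : ℝ, HasDerivAt (fun u => E u x) ((E s * A) x) s := by
    intro s
    have := (hE' s).clm_apply (hasDerivAt_const s x)
    simpa using this
  have hh' : ∀ s : ℝ, HasDerivAt h (h1 s) s := by
    intro s
    have := HasDerivAt.inner ℝ (hEx' s) (hasDerivAt_const s x)
    simpa [hhdef, hh1def] using this
  have hEAx' : ∀ s : ℝ, HasDerivAt (fun u => (E u * A) x) ((E s * A * A) x) s := by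
    intro s
    have := ((hE' s).mul_const A).clm_apply (hasDerivAt_const s x)
    simpa using this
  have hh1' : ∀ s : ℝ, HasDerivAt h1 (h2 s) s := by
    intro s
    have := HasDerivAt.inner ℝ (hEAx' s) (hasDerivAt_const s x)
    simpa [hh1def, hh2def] using this
  -- pointwise identities with y = E (s/2) x
  have hid1 : ∀ s : ℝ, h1 s = ⟪A (E (s/2) x), E (s/2) x⟫ := by
    intro s
    have e1 : (E s * A) x = E (s/2) ((E (s/2) * A) x) := by
      show E s (A x) = E (s/2) ((E (s/2)) (A x))
      rw [← hsplit]; norm_num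
    rw [hh1def]
    show ⟪(E s * A) x, x⟫ = _
    rw [e1, hEsa]
    have e2 : (E (s/2) * A) x = A (E (s/2) x) := by
      rw [← hAE]; rfl
    rw [show ((E (s/2) * A) x = A (E (s/2) x)) from e2]
  have hid2 : ∀ s : ℝ, h2 s = ‖A (E (s/2) x)‖ ^ 2 := by
    intro s
    have e1 : (E s * A * A) x = E (s/2) ((E (s/2) * A * A) x) := by
      show E s (A (A x)) = E (s/2) (E (s/2) (A (A x)))
      rw [← hsplit]; norm_num
    rw [hh2def]
    show ⟪(E s * A * A) x, x⟫ = _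
    rw [e1, hEsa]
    have e2 : (E (s/2) * A * A) x = A (A (E (s/2) x)) := by
      have h3 : E (s/2) * A * A = A * (A * E (s/2)) := by
        rw [← hAE, mul_assoc, ← hAE]
      rw [h3]; rfl
    rw [e2, hA, real_inner_self_eq_norm_sq]
  -- log-convexity via second derivative
  set f : ℝ → ℝ := fun s => Real.log (h s) with hfdef
  have hf' : ∀ s : ℝ, HasDerivAt f (h1 s / h s) s := fun s =>
    (hh' s).log (hpos s).ne'
  have hf'' : ∀ s : ℝ, HasDerivAt (fun u => h1 u / h u)
      ((h2 s * h s - h1 s * h1 s) / (h s) ^ 2) s := fun s =>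
    (hh1' s).div (hh' s) (hpos s).ne'
  have hconv : ConvexOn ℝ Set.univ f := by
    apply convexOn_of_hasDerivWithinAt2_nonneg convex_univ
      (fun s _ => ((hf' s).continuousAt.continuousWithinAt))
      (f' := fun s => h1 s / h s)
      (f'' := fun s => (h2 s * h s - h1 s * h1 s) / (h s) ^ 2)
    · intro s _; exact (hf' s).hasDerivWithinAt
    · intro s _; exact (hf'' s).hasDerivWithinAt
    · intro s _
      apply div_nonneg _ (sq_nonneg _)
      rw [hid1 s, hid2 s, hval s, sub_nonneg]
      calc ⟪A (E (s/2) x), E (s/2) x⟫ * ⟪A (E (s/2) x), E (s/2) x⟫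
          ≤ ⟪A (E (s/2) x), A (E (s/2) x)⟫ * ⟪E (s/2) x, E (s/2) x⟫ :=
            real_inner_mul_inner_self_le _ _
        _ = ‖A (E (s/2) x)‖ ^ 2 * ‖E (s/2) x‖ ^ 2 := by
            rw [real_inner_self_eq_norm_sq, real_inner_self_eq_norm_sq]
  -- apply convexity at 2t between 0 and 2T
  set θ : ℝ := t / T with hθdef
  have hθ0 : 0 ≤ θ := div_nonneg ht0 hT.le
  have hθ1 : θ ≤ 1 := (div_le_one hT).mpr htT
  have hcomb : (1 - θ) • (0:ℝ) + θ • (2*T) = 2*t := by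
    field_simp [hθdef]
    rw [hθdef, smul_eq_mul, smul_eq_mul, mul_zero, zero_add, mul_comm 2 T, ← mul_assoc,
      div_mul_cancel₀ t hT.ne', mul_comm]
  have hkey : f (2*t) ≤ (1 - θ) * f 0 + θ * f (2*T) := by
    have := hconv.2 (Set.mem_univ (0:ℝ)) (Set.mem_univ (2*T))
      (sub_nonneg.mpr hθ1) hθ0 (by ring)
    rw [hcomb] at this
    simpa [smul_eq_mul] using this
  -- translate back
  have hnorm_t : ‖exp (t • A) x‖ ^ 2 = h (2*t) := by
    rw [hval]; norm_num; rfl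
  have hnorm_T : ‖exp (T • A) x‖ ^ 2 = h (2*T) := by
    rw [hval]; norm_num; rfl
  have hnorm_0 : ‖x‖ ^ 2 = h 0 := by
    have hone : E 0 = 1 := by
      show exp ((0:ℝ) • A) = 1
      rw [zero_smul, exp_zero]
    rw [hval, show (0:ℝ)/2 = 0 by norm_num, hone, ContinuousLinearMap.one_apply]
  -- exponentiate
  have hexp : h (2*t) ≤ (h 0) ^ (1 - θ) * (h (2*T)) ^ θ := by
    have h0 : h (2*t) = Real.exp (f (2*t)) := (Real.exp_log (hpos _)).symm
    rw [h0]
    calc Real.exp (f (2*t)) ≤ Real.exp ((1 - θ) * f 0 + θ * f (2*T)) :=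
          Real.exp_le_exp.mpr hkey
      _ = (h 0) ^ (1 - θ) * (h (2*T)) ^ θ := by
          rw [Real.exp_add, hfdef]
          rw [Real.rpow_def_of_pos (hpos 0), Real.rpow_def_of_pos (hpos (2*T))]
          ring_nf
  -- finish via squares
  have hL : 0 ≤ ‖exp (t • A) x‖ := norm_nonneg _
  have hR : 0 ≤ ‖x‖ ^ (1 - θ) * ‖exp (T • A) x‖ ^ θ :=
    mul_nonneg (Real.rpow_nonneg (norm_nonneg _) _) (Real.rpow_nonneg (norm_nonneg _) _)
  have hsq : (‖exp (t • A) x‖) ^ 2 ≤ (‖x‖ ^ (1 - θ) * ‖exp (T • A) x‖ ^ θ) ^ 2 := by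
    rw [hnorm_t, mul_pow, ← Real.rpow_natCast (‖x‖ ^ (1 - θ)) 2,
      ← Real.rpow_natCast (‖exp (T • A) x‖ ^ θ) 2,
      ← Real.rpow_mul (norm_nonneg _), ← Real.rpow_mul (norm_nonneg _)]
    calc h (2*t) ≤ (h 0) ^ (1 - θ) * (h (2*T)) ^ θ := hexp
      _ = ‖x‖ ^ ((1 - θ) * 2) * ‖exp (T • A) x‖ ^ (θ * 2) := by
          rw [← hnorm_0, ← hnorm_T, ← Real.rpow_natCast ‖x‖ 2,
            ← Real.rpow_natCast ‖exp (T • A) x‖ 2,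
            ← Real.rpow_mul (norm_nonneg _), ← Real.rpow_mul (norm_nonneg _)]
          ring_nf
  exact (pow_le_pow_iff_left₀ hL hR two_ne_zero).mp hsq
end

section
/- Let H be a real Hilbert space, let A : H → H be a self-adjoint continuous linear operator, and let x ∈ H with x ≠ 0. Then the function t ↦ log(‖exp(tA) x‖²) is convex on ℝ. -/
open scoped RealInnerProductSpace

theorem stmt_1
    {H : Type*} [NormedAddCommGroup H] [InnerProductSpace ℝ H] [CompleteSpace H]
    (A : H →L[ℝ] H) (hA : ∀ x y : H, ⟪A x, y⟫ = ⟪x, A y⟫)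
    (x : H) (hx : x ≠ 0) :
    ConvexOn ℝ Set.univ (fun t : ℝ => Real.log (‖NormedSpace.exp (t • A) x‖ ^ 2)) := by
  set u : ℝ → H := fun t => NormedSpace.exp (t • A) x with hu_def
  have hu : ∀ t : ℝ, HasDerivAt u (A (u t)) t := by
    intro t
    have h := (hasDerivAt_exp_smul_const' (𝕂 := ℝ) A t).clm_apply (hasDerivAt_const t x)
    simpa using h
  have hune : ∀ t : ℝ, u t ≠ 0 := by
    intro t h
    apply hx
    have h1 : NormedSpace.exp (-(t • A)) * NormedSpace.exp (t • A) = 1 := by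
      rw [← NormedSpace.exp_add_of_commute_of_mem_ball (𝕂 := ℝ) (Commute.refl (t • A)).neg_left
          (by simp [NormedSpace.expSeries_radius_eq_top]) (by simp [NormedSpace.expSeries_radius_eq_top]),
        neg_add_cancel, NormedSpace.exp_zero]
    have h2 := congrArg (fun B : H →L[ℝ] H => B x) h1
    simp only [ContinuousLinearMap.mul_apply, ContinuousLinearMap.one_apply] at h2
    rw [← h2]
    show NormedSpace.exp (-(t • A)) (u t) = 0
    rw [h, map_zero]
  set f : ℝ → ℝ := fun t => ⟪u t, u t⟫ with hf_def
  have hfpos : ∀ t : ℝ, 0 < f t := by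
    intro t
    rw [hf_def]
    simp only [real_inner_self_eq_norm_sq]
    exact pow_pos (norm_pos_iff.mpr (hune t)) 2
  have hf : ∀ t : ℝ, HasDerivAt f (2 * ⟪A (u t), u t⟫) t := by
    intro t
    have h := (hu t).inner ℝ (hu t)
    convert h using 1
    · rfl
    · rfl
    rw [real_inner_comm (u t) (A (u t))]; ring
  set g : ℝ → ℝ := fun t => ⟪A (u t), u t⟫ with hg_def
  have hAu : ∀ t : ℝ, HasDerivAt (fun s => A (u s)) (A (A (u t))) t := fun t =>
    A.hasFDerivAt.comp_hasDerivAt t (hu t)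
  have hg : ∀ t : ℝ, HasDerivAt g (2 * ⟪A (u t), A (u t)⟫) t := by
    intro t
    have h := (hAu t).inner ℝ (hu t)
    convert h using 1
    · rfl
    · rfl
    rw [hA (A (u t)) (u t)]
    ring
  have hF : ∀ t : ℝ, HasDerivAt (fun s => Real.log (f s)) (2 * g t / f t) t := fun t =>
    (hf t).log (hfpos t).ne'
  have hF' : ∀ t : ℝ, HasDerivAt (fun s => 2 * g s / f s)
      ((2 * (2 * ⟪A (u t), A (u t)⟫) * f t - 2 * g t * (2 * g t)) / f t ^ 2) t := fun t =>
    ((hg t).const_mul 2).div (hf t) (hfpos t).ne'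
  have key : ConvexOn ℝ Set.univ (fun t : ℝ => Real.log (f t)) := by
    apply convexOn_of_hasDerivWithinAt2_nonneg (f' := fun s => 2 * g s / f s)
      (f'' := fun t => (2 * (2 * ⟪A (u t), A (u t)⟫) * f t - 2 * g t * (2 * g t)) / f t ^ 2)
      convex_univ
    · exact fun t _ => ((hF t).continuousAt).continuousWithinAt
    · exact fun t _ => (hF t).hasDerivWithinAt
    · exact fun t _ => (hF' t).hasDerivWithinAt
    · intro t _
      apply div_nonneg _ (sq_nonneg _)
      have hcs : g t ^ 2 ≤ ⟪A (u t), A (u t)⟫ * f t := by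
        have h1 : |⟪A (u t), u t⟫| ≤ ‖A (u t)‖ * ‖u t‖ := abs_real_inner_le_norm _ _
        have h2 : g t ^ 2 ≤ (‖A (u t)‖ * ‖u t‖) ^ 2 := by
          rw [← sq_abs]
          exact pow_le_pow_left₀ (abs_nonneg _) h1 2
        calc g t ^ 2 ≤ (‖A (u t)‖ * ‖u t‖) ^ 2 := h2
          _ = ‖A (u t)‖ ^ 2 * ‖u t‖ ^ 2 := by ring
          _ = ⟪A (u t), A (u t)⟫ * f t := by
              simp [hf_def, real_inner_self_eq_norm_sq]
      nlinarith [hcs]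
  have : (fun t : ℝ => Real.log (‖NormedSpace.exp (t • A) x‖ ^ 2)) =
      fun t : ℝ => Real.log (f t) := by
    funext t
    rw [hf_def]
    simp [real_inner_self_eq_norm_sq]
    rfl
  rw [this]
  exact key
end

section
/- Let H be a real Hilbert space, let A : H → H be a self-adjoint continuous linear operator, let T > 0, let M > 0, and let x ∈ H with x ≠ 0 and ‖x‖ ≤ M. Then for every t ∈ [0,T], ‖exp(tA) x‖ ≤ M^(1 − t/T) · ‖exp(TA) x‖^(t/T), where the powers are real powers. -/
open scoped RealInnerProductSpace

theorem stmt_2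
    {H : Type*} [NormedAddCommGroup H] [InnerProductSpace ℝ H] [CompleteSpace H]
    (A : H →L[ℝ] H) (hA : ∀ x y : H, ⟪A x, y⟫ = ⟪x, A y⟫)
    (T M : ℝ) (hT : 0 < T) (hM : 0 < M)
    (x : H) (hx : x ≠ 0) (hxM : ‖x‖ ≤ M) :
    ∀ t ∈ Set.Icc (0 : ℝ) T,
      ‖NormedSpace.exp (t • A) x‖ ≤
        M ^ (1 - t / T) * ‖NormedSpace.exp (T • A) x‖ ^ (t / T) := by
  intro t ht
  set Y : ℝ → H := fun s => NormedSpace.exp (s • A) x with hYdef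
  -- Y is never zero
  have hYne : ∀ s : ℝ, Y s ≠ 0 := by
    intro s h
    obtain ⟨u, hu⟩ := NormedSpace.isUnit_exp_of_mem_ball (𝕂 := ℝ) (x := s • A)
      ((NormedSpace.expSeries_radius_eq_top ℝ (H →L[ℝ] H)).symm ▸ edist_lt_top _ _)
    apply hx
    have h1 : ((↑u⁻¹ * ↑u : H →L[ℝ] H)) x = 0 := by
      rw [ContinuousLinearMap.mul_apply, hu]
      exact (congrArg _ h).trans (map_zero _)
    simpa [u.inv_mul] using h1
  -- derivative of Y
  have hYd : ∀ s : ℝ, HasDerivAt Y (A (Y s)) s := by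
    intro s
    have h1 : HasDerivAt (fun u : ℝ => NormedSpace.exp (u • A))
        (A * NormedSpace.exp (s • A)) s := hasDerivAt_exp_smul_const' A s
    have h2 := h1.clm_apply (hasDerivAt_const s x)
    simpa using h2
  set F : ℝ → ℝ := fun s => ⟪Y s, Y s⟫ with hFdef
  have hFpos : ∀ s : ℝ, 0 < F s := by
    intro s
    rw [hFdef]
    simp only [real_inner_self_eq_norm_sq]
    exact pow_pos (norm_pos_iff.2 (hYne s)) 2
  set G : ℝ → ℝ := fun s => 2 * ⟪A (Y s), Y s⟫ with hGdef
  have hFd : ∀ s : ℝ, HasDerivAt F (G s) s := by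
    intro s
    have := (hYd s).inner ℝ (hYd s)
    refine this.congr_deriv ?_
    simp only [hGdef]
    rw [real_inner_comm (A (Y s)) (Y s)]
    ring
  have hAYd : ∀ s : ℝ, HasDerivAt (fun u => A (Y u)) (A (A (Y s))) s :=
    fun s => A.hasFDerivAt.comp_hasDerivAt s (hYd s)
  have hGd : ∀ s : ℝ, HasDerivAt G (4 * ‖A (Y s)‖ ^ 2) s := by
    intro s
    have := ((hAYd s).inner ℝ (hYd s)).const_mul (2 : ℝ)
    refine this.congr_deriv ?_
    have e1 : ⟪A (A (Y s)), Y s⟫ = ‖A (Y s)‖ ^ 2 := by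
      rw [hA, real_inner_comm, real_inner_self_eq_norm_sq]
    have e2 : ⟪A (Y s), A (Y s)⟫ = ‖A (Y s)‖ ^ 2 := real_inner_self_eq_norm_sq _
    rw [e1, e2]; ring
  -- log F is convex
  set f : ℝ → ℝ := fun s => Real.log (F s) with hfdef
  have hfd : ∀ s : ℝ, HasDerivAt f (G s / F s) s :=
    fun s => (hFd s).log (hFpos s).ne'
  have hfd2 : ∀ s : ℝ, HasDerivAt (fun u => G u / F u)
      ((4 * ‖A (Y s)‖ ^ 2 * F s - G s * G s) / F s ^ 2) s :=
    fun s => (hGd s).div (hFd s) (hFpos s).ne'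
  have hconv : ConvexOn ℝ Set.univ f := by
    apply convexOn_of_hasDerivWithinAt2_nonneg (f' := fun s => G s / F s)
      (f'' := fun s => (4 * ‖A (Y s)‖ ^ 2 * F s - G s * G s) / F s ^ 2) convex_univ
    · exact fun s _ => ((hfd s).continuousAt).continuousWithinAt
    · intro s _; exact (hfd s).hasDerivWithinAt
    · intro s _; exact (hfd2 s).hasDerivWithinAt
    · intro s _
      apply div_nonneg _ (sq_nonneg _)
      have hcs := real_inner_mul_inner_self_le (A (Y s)) (Y s)
      have e2 : ⟪A (Y s), A (Y s)⟫ = ‖A (Y s)‖ ^ 2 := real_inner_self_eq_norm_sq _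
      simp only [hGdef, hFdef]
      rw [e2] at hcs
      nlinarith [hcs]
  -- apply convexity at t = (1 - t/T) • 0 + (t/T) • T
  have hTne : T ≠ 0 := hT.ne'
  have hb0 : 0 ≤ t / T := div_nonneg ht.1 hT.le
  have hb1 : t / T ≤ 1 := (div_le_one hT).2 ht.2
  have ha0 : 0 ≤ 1 - t / T := by linarith
  have hsum : (1 - t / T) + t / T = 1 := by ring
  have hcomb : (1 - t / T) • (0 : ℝ) + (t / T) • T = t := by
    simp only [smul_eq_mul, mul_zero, zero_add]
    field_simp
  have hlog : f t ≤ (1 - t / T) * f 0 + (t / T) * f T := by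
    have := hconv.2 (Set.mem_univ (0 : ℝ)) (Set.mem_univ T) ha0 hb0 hsum
    rw [hcomb] at this
    simpa using this
  -- exponentiate
  have hFt : F t ≤ F 0 ^ (1 - t / T) * F T ^ (t / T) := by
    have h1 : F t = Real.exp (f t) := (Real.exp_log (hFpos t)).symm
    rw [h1]
    calc Real.exp (f t) ≤ Real.exp ((1 - t / T) * f 0 + (t / T) * f T) :=
          Real.exp_le_exp.2 hlog
      _ = F 0 ^ (1 - t / T) * F T ^ (t / T) := by
          rw [Real.exp_add, Real.rpow_def_of_pos (hFpos 0), Real.rpow_def_of_pos (hFpos T),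
            hfdef]
          ring_nf
  -- convert to norms
  have hF0 : F 0 = ‖x‖ ^ 2 := by
    simp only [hFdef, real_inner_self_eq_norm_sq]
    congr 1
    simp [hYdef, NormedSpace.exp_zero]
  have hFnorm : ∀ s : ℝ, F s = ‖Y s‖ ^ 2 := fun s => real_inner_self_eq_norm_sq _
  have key : ‖Y t‖ ≤ ‖x‖ ^ (1 - t / T) * ‖Y T‖ ^ (t / T) := by
    have hrhs : (0 : ℝ) ≤ ‖x‖ ^ (1 - t / T) * ‖Y T‖ ^ (t / T) :=
      mul_nonneg (Real.rpow_nonneg (norm_nonneg _) _) (Real.rpow_nonneg (norm_nonneg _) _)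
    have hsq : ‖Y t‖ ^ 2 ≤ (‖x‖ ^ (1 - t / T) * ‖Y T‖ ^ (t / T)) ^ 2 := by
      rw [mul_pow, ← Real.rpow_natCast (‖x‖ ^ (1 - t / T)) 2,
        ← Real.rpow_natCast (‖Y T‖ ^ (t / T)) 2,
        ← Real.rpow_mul (norm_nonneg _), ← Real.rpow_mul (norm_nonneg _)]
      have := hFt
      rw [hF0, hFnorm t, hFnorm T] at this
      calc ‖Y t‖ ^ 2 ≤ (‖x‖ ^ 2) ^ (1 - t / T) * (‖Y T‖ ^ 2) ^ (t / T) := this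
        _ = ‖x‖ ^ ((1 - t / T) * 2) * ‖Y T‖ ^ (t / T * 2) := by
            rw [← Real.rpow_natCast ‖x‖ 2, ← Real.rpow_natCast ‖Y T‖ 2,
              ← Real.rpow_mul (norm_nonneg _), ← Real.rpow_mul (norm_nonneg _)]
            push_cast
            ring_nf
    nlinarith [norm_nonneg (Y t), hrhs]
  calc ‖Y t‖ ≤ ‖x‖ ^ (1 - t / T) * ‖Y T‖ ^ (t / T) := key
    _ ≤ M ^ (1 - t / T) * ‖Y T‖ ^ (t / T) := by
        apply mul_le_mul_of_nonneg_right _ (Real.rpow_nonneg (norm_nonneg _) _)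
        exact Real.rpow_le_rpow (norm_nonneg _) hxM ha0
end

section
/- Let H be a real Hilbert space, let T > 0 and D ≥ 0 be real numbers, and let Y, Φ : ℝ → H be functions such that for every t ∈ [0,T]: Y is differentiable at t with ⟨Y′(t), Y(t)⟩ ≤ D‖Y(t)‖², and Φ is differentiable at t with ⟨Φ′(t), Φ(t)⟩ ≥ −D‖Φ(t)‖². Assume Φ(T) = Y(T). Then ‖Φ(0)‖ ≤ √(e^(2DT)(1 + 2TD e^(2DT))) · ‖Y(0)‖. -/
open scoped RealInnerProductSpace

lemma gronwall_aux
    {H : Type*} [NormedAddCommGroup H] [InnerProductSpace ℝ H]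
    (c T : ℝ) (hT : 0 ≤ T)
    (u u' : ℝ → H)
    (hu : ∀ t ∈ Set.Icc (0 : ℝ) T, HasDerivAt u (u' t) t)
    (hineq : ∀ t ∈ Set.Icc (0 : ℝ) T, ⟪u' t, u t⟫ ≤ c * ‖u t‖ ^ 2) :
    ‖u T‖ ^ 2 ≤ Real.exp (2 * c * T) * ‖u 0‖ ^ 2 := by
  set F : ℝ → ℝ := fun t => Real.exp (-(2 * c) * t) * ‖u t‖ ^ 2 with hF
  have hderiv : ∀ t ∈ Set.Icc (0 : ℝ) T, HasDerivAt F
      ((Real.exp (-(2 * c) * t) * -(2 * c)) * ‖u t‖ ^ 2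
        + Real.exp (-(2 * c) * t) * (2 * ⟪u t, u' t⟫)) t := by
    intro t ht
    have hid : HasDerivAt (fun t : ℝ => -(2 * c) * t) (-(2 * c)) t := by
      simpa using (hasDerivAt_id t).const_mul (-(2 * c))
    have he := hid.exp
    have hn : HasDerivAt (fun t => ‖u t‖ ^ 2) (2 * ⟪u t, u' t⟫) t :=
      (hu t ht).norm_sq
    exact he.mul hn
  have hanti : AntitoneOn F (Set.Icc 0 T) := by
    apply antitoneOn_of_deriv_nonpos (convex_Icc 0 T)
    · intro t ht
      exact ((hderiv t ht).continuousAt).continuousWithinAt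
    · intro t ht
      rw [interior_Icc] at ht
      exact ((hderiv t (Set.Ioo_subset_Icc_self ht)).differentiableAt).differentiableWithinAt
    · intro t ht
      rw [interior_Icc] at ht
      have ht' := Set.Ioo_subset_Icc_self ht
      rw [(hderiv t ht').deriv]
      have h1 := hineq t ht'
      have h2 : (0:ℝ) < Real.exp (-(2 * c) * t) := Real.exp_pos _
      have h3 : ⟪u t, u' t⟫ = ⟪u' t, u t⟫ := real_inner_comm _ _
      nlinarith
  have hFT : F T ≤ F 0 := hanti (Set.left_mem_Icc.2 hT) (Set.right_mem_Icc.2 hT) hT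
  have h0 : F 0 = ‖u 0‖ ^ 2 := by simp [hF]
  have hE : (0:ℝ) < Real.exp (-(2 * c) * T) := Real.exp_pos _
  have key : Real.exp (-(2 * c) * T) * ‖u T‖ ^ 2 ≤ ‖u 0‖ ^ 2 := by
    rw [← h0]; exact hFT
  have hexp : Real.exp (2 * c * T) * Real.exp (-(2 * c) * T) = 1 := by
    rw [← Real.exp_add]; ring_nf; simp
  nlinarith [Real.exp_pos (2 * c * T), sq_nonneg (‖u T‖)]

theorem stmt_9
    {H : Type*} [NormedAddCommGroup H] [InnerProductSpace ℝ H] [CompleteSpace H]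
    (T D : ℝ) (hT : 0 < T) (hD : 0 ≤ D)
    (Y Y' Φ Φ' : ℝ → H)
    (hY : ∀ t ∈ Set.Icc (0 : ℝ) T, HasDerivAt Y (Y' t) t)
    (hYineq : ∀ t ∈ Set.Icc (0 : ℝ) T, ⟪Y' t, Y t⟫ ≤ D * ‖Y t‖ ^ 2)
    (hΦ : ∀ t ∈ Set.Icc (0 : ℝ) T, HasDerivAt Φ (Φ' t) t)
    (hΦineq : ∀ t ∈ Set.Icc (0 : ℝ) T, -(D * ‖Φ t‖ ^ 2) ≤ ⟪Φ' t, Φ t⟫)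
    (hTfin : Φ T = Y T) :
    ‖Φ 0‖ ≤ Real.sqrt (Real.exp (2 * D * T) * (1 + 2 * T * D * Real.exp (2 * D * T))) *
      ‖Y 0‖ := by
  have hT' : (0:ℝ) ≤ T := hT.le
  -- forward estimate for Y
  have hYest : ‖Y T‖ ^ 2 ≤ Real.exp (2 * D * T) * ‖Y 0‖ ^ 2 :=
    gronwall_aux D T hT' Y Y' hY hYineq
  -- backward estimate for Φ via time reversal
  have hΨest : ‖Φ 0‖ ^ 2 ≤ Real.exp (2 * D * T) * ‖Φ T‖ ^ 2 := by
    have := gronwall_aux D T hT' (fun t => Φ (T - t)) (fun t => -(Φ' (T - t)))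
      (fun t ht => by
        have hmem : T - t ∈ Set.Icc (0:ℝ) T := by
          constructor <;> [linarith [ht.2]; linarith [ht.1]]
        have hsub : HasDerivAt (fun s : ℝ => T - s) (-1) t := by
          simpa using (hasDerivAt_id t).const_sub T
        have h := (hΦ (T - t) hmem).scomp t hsub
        rw [neg_one_smul] at h
        exact h)
      (fun t ht => by
        have hmem : T - t ∈ Set.Icc (0:ℝ) T := by
          constructor <;> [linarith [ht.2]; linarith [ht.1]]
        have := hΦineq (T - t) hmem
        rw [inner_neg_left]
        linarith)
    simpa using this
  -- combine
  have hcomb : ‖Φ 0‖ ^ 2 ≤ Real.exp (2 * D * T) * Real.exp (2 * D * T) * ‖Y 0‖ ^ 2 := by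
    rw [hTfin] at hΨest
    nlinarith [Real.exp_pos (2 * D * T)]
  set E : ℝ := Real.exp (2 * D * T) * (1 + 2 * T * D * Real.exp (2 * D * T)) with hEdef
  have hEkey : Real.exp (2 * D * T) * Real.exp (2 * D * T) ≤ E := by
    have h1 : (-(2 * D * T)) + 1 ≤ Real.exp (-(2 * D * T)) := Real.add_one_le_exp _
    have h2 : Real.exp (-(2 * D * T)) * Real.exp (2 * D * T) = 1 := by
      rw [← Real.exp_add]; simp
    have h3 : (0:ℝ) < Real.exp (2 * D * T) := Real.exp_pos _
    rw [hEdef]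
    nlinarith
  have hfin : ‖Φ 0‖ ^ 2 ≤ E * ‖Y 0‖ ^ 2 := by
    nlinarith [sq_nonneg (‖Y 0‖)]
  have hEnn : (0:ℝ) ≤ E := le_trans (by positivity) hEkey
  calc ‖Φ 0‖ = Real.sqrt (‖Φ 0‖ ^ 2) := by rw [Real.sqrt_sq (norm_nonneg _)]
    _ ≤ Real.sqrt (E * ‖Y 0‖ ^ 2) := Real.sqrt_le_sqrt hfin
    _ = Real.sqrt E * ‖Y 0‖ := by
        rw [Real.sqrt_mul hEnn, Real.sqrt_sq (norm_nonneg _)]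
end
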